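/- Suppose in addition that there are real numbers s and t with t > 0 such that s_i = s and t_i = t for all i ≥ 1. Then for every integer n ≥ 1 and every real α, with x = (α+s)/(2√t), one has f_n(α) = (√t)^n·U_n(x) − (s − s_0)·(√t)^{n−1}·U_{n−1}(x) + (t − t_0)·(√t)^{n−2}·U_{n−2}(x), where for n = 1 the last term is interpreted as 0 (since U_{−1} = 0). -/

import Mathlib

/-- The polynomials `f_n(α)`: `f_0 = 1`, `f_1 = α + s_0`, and
`f_n(α) = (α + s_{n-1}) f_{n-1}(α) - t_{n-2} f_{n-2}(α)` for `n ≥ 2`. -/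
def fpoly (s t : ℕ → ℝ) (α : ℝ) : ℕ → ℝ
  | 0 => 1
  | 1 => α + s 0
  | n+2 => (α + s (n+1)) * fpoly s t α (n+1) - t n * fpoly s t α n

/-- The Chebyshev polynomial of the second kind, evaluated at a real argument
(`ℤ`-indexed; in particular `chebU (-1) x = 0`). -/
noncomputable def chebU (k : ℤ) (x : ℝ) : ℝ := (Polynomial.Chebyshev.U ℝ k).eval x

/-- Eq. (4.2): if `s_i = s` and `t_i = t` for `i ≥ 1` with `t > 0`, then for `n ≥ 1`
and real `α`, with `x = (α+s)/(2√t)`,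
`f_n(α) = (√t)^n U_n(x) - (s-s_0)(√t)^{n-1} U_{n-1}(x) + (t-t_0)(√t)^{n-2} U_{n-2}(x)`. -/
theorem fpoly_eq_chebyshev (s t : ℕ → ℝ) (ht : ∀ n, t n ≠ 0)
    (sc tc : ℝ) (htc : 0 < tc)
    (hs : ∀ i, 1 ≤ i → s i = sc) (htt : ∀ i, 1 ≤ i → t i = tc)
    (n : ℕ) (hn : 1 ≤ n) (α : ℝ) :
    fpoly s t α n
      = Real.sqrt tc ^ (n : ℤ) * chebU (n : ℤ) ((α + sc) / (2 * Real.sqrt tc))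
          - (sc - s 0) * Real.sqrt tc ^ ((n : ℤ) - 1)
              * chebU ((n : ℤ) - 1) ((α + sc) / (2 * Real.sqrt tc))
          + (tc - t 0) * Real.sqrt tc ^ ((n : ℤ) - 2)
              * chebU ((n : ℤ) - 2) ((α + sc) / (2 * Real.sqrt tc)) := by
  set r := Real.sqrt tc with hrdef
  have hr : 0 < r := Real.sqrt_pos.mpr htc
  have hr0 : r ≠ 0 := ne_of_gt hr
  have hr2 : r ^ 2 = tc := Real.sq_sqrt htc.le
  set x := (α + sc) / (2 * r) with hxdef
  have hx : α + sc = 2 * x * r := by rw [hxdef]; field_simp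
  have cheb : ∀ k : ℤ, chebU (k + 2) x = 2 * x * chebU (k + 1) x - chebU k x := by
    intro k
    unfold chebU
    rw [Polynomial.Chebyshev.U_add_two]
    simp
  have cheb0 : chebU 0 x = 1 := by simp [chebU]
  have cheb1 : chebU 1 x = 2 * x := by simp [chebU, Polynomial.Chebyshev.U_one]
  have chebm1 : chebU (-1) x = 0 := by simp [chebU, Polynomial.Chebyshev.U_neg_one]
  have key : ∀ k : ℤ, r ^ (k + 2) * chebU (k + 2) x
      = (α + sc) * (r ^ (k + 1) * chebU (k + 1) x) - tc * (r ^ k * chebU k x) := by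
    intro k
    rw [cheb k, hx, ← hr2]
    have h1 : r ^ (k + 2) = r ^ k * r * r := by
      rw [show (k + 2 : ℤ) = k + 1 + 1 by ring, zpow_add_one₀ hr0, zpow_add_one₀ hr0]
    have h2 : r ^ (k + 1) = r ^ k * r := zpow_add_one₀ hr0 k
    rw [h1, h2]
    ring
  set P : ℕ → Prop := fun m =>
    fpoly s t α m
      = r ^ (m : ℤ) * chebU (m : ℤ) x
          - (sc - s 0) * r ^ ((m : ℤ) - 1) * chebU ((m : ℤ) - 1) x
          + (tc - t 0) * r ^ ((m : ℤ) - 2) * chebU ((m : ℤ) - 2) x with hP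
  have base1 : P 1 := by
    show fpoly s t α 1 = _
    have h : fpoly s t α 1 = α + s 0 := rfl
    rw [h]
    push_cast
    norm_num [cheb1, cheb0, chebm1]
    rw [hxdef]
    field_simp
    ring
  have base2 : P 2 := by
    show fpoly s t α 2 = _
    have hf : fpoly s t α 2 = (α + s 1) * (α + s 0) - t 0 := by
      show (α + s 1) * fpoly s t α 1 - t 0 * fpoly s t α 0 = _
      show (α + s 1) * (α + s 0) - t 0 * 1 = _
      ring
    have cheb2 : chebU 2 x = 2 * x * (2 * x) - 1 := by
      simpa [cheb1, cheb0] using cheb 0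
    rw [hf, hs 1 le_rfl]
    push_cast
    norm_num [cheb2, cheb1, cheb0]
    have h2 : r ^ (2 : ℤ) = tc := by rw [zpow_two, ← hr2]; ring
    rw [hr2, hxdef, ← hr2]
    field_simp
    ring
  have step : ∀ m : ℕ, 1 ≤ m → P m → P (m + 1) → P (m + 2) := by
    intro m hm h1 h2
    show fpoly s t α (m + 2) = _
    have hf : fpoly s t α (m + 2)
        = (α + sc) * fpoly s t α (m + 1) - tc * fpoly s t α m := by
      show (α + s (m+1)) * fpoly s t α (m+1) - t m * fpoly s t α m = _
      rw [hs (m+1) (by omega), htt m hm]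
    rw [hf, h1, h2]
    have k0 := key ((m : ℤ))
    have k1 := key ((m : ℤ) - 1)
    have k2 := key ((m : ℤ) - 2)
    have e1 : ((m : ℤ) - 1) + 2 = (m : ℤ) + 1 := by ring
    have e2 : ((m : ℤ) - 1) + 1 = (m : ℤ) := by ring
    have e3 : ((m : ℤ) - 2) + 2 = (m : ℤ) := by ring
    have e4 : ((m : ℤ) - 2) + 1 = (m : ℤ) - 1 := by ring
    rw [e1, e2] at k1
    rw [e3, e4] at k2
    push_cast
    have e5 : ((m : ℤ) + 2) - 1 = (m : ℤ) + 1 := by ring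
    have e6 : ((m : ℤ) + 2) - 2 = (m : ℤ) := by ring
    have e7 : ((m : ℤ) + 1) - 1 = (m : ℤ) := by ring
    have e8 : ((m : ℤ) + 1) - 2 = (m : ℤ) - 1 := by ring
    rw [e5, e6, e7, e8]
    linear_combination -k0 + (sc - s 0) * k1 - (tc - t 0) * k2
  have main : ∀ m : ℕ, P (m + 1) := by
    intro m
    induction m using Nat.strong_induction_on with
    | _ m ih =>
      match m with
      | 0 => exact base1
      | 1 => exact base2
      | k + 2 => exact step (k + 1) (by omega) (ih k (by omega)) (ih (k+1) (by omega))
  have := main (n - 1)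
  rwa [Nat.sub_add_cancel hn] at this
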